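/- arXiv:2101.09327 — 5 statements merged into one kernel-verified Lean document; each statement's English description precedes it below -/
import Mathlib

section
/- Under the same recursion Q_{k-1} = α (Q_k + α I)^{-1} Q_k + F_{k-1}* L_{k-1} F_{k-1} with Q_N = F_N* L_N F_N, if additionally ‖L_k‖ ≤ 1 for all k, then for every k one has ‖Q_k‖ ≤ α + max_j ‖F_j‖². -/
open scoped RealInnerProductSpace

section Aux

variable {X Y : Type*} [NormedAddCommGroup X] [InnerProductSpace ℝ X] [CompleteSpace X]
  [NormedAddCommGroup Y] [InnerProductSpace ℝ Y] [CompleteSpace Y]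

lemma aux_isUnit {Q : X →L[ℝ] X} (hpos : ∀ z, 0 ≤ ⟪z, Q z⟫) {α : ℝ} (hα : 0 < α) :
    IsUnit (Q + α • (1 : X →L[ℝ] X)) := by
  set T := Q + α • (1 : X →L[ℝ] X) with hT
  have hB : IsCoercive ((innerSL ℝ).comp T) := by
    refine ⟨α, hα, fun u => ?_⟩
    have h1 : ((innerSL ℝ).comp T) u u = ⟪Q u, u⟫ + α * ⟪u, u⟫ := by
      simp [hT, ContinuousLinearMap.comp_apply, innerSL_apply_apply, ContinuousLinearMap.add_apply,
        ContinuousLinearMap.smul_apply, ContinuousLinearMap.one_apply, inner_add_left,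
        real_inner_smul_left]
    have h2 : 0 ≤ ⟪Q u, u⟫ := by rw [real_inner_comm]; exact hpos u
    rw [h1]
    nlinarith [real_inner_self_eq_norm_mul_norm u]
  set e := hB.continuousLinearEquivOfBilin with he
  have hTe : (e : X →L[ℝ] X) = T := by
    ext v
    refine ext_inner_right ℝ fun w => ?_
    rw [ContinuousLinearEquiv.coe_coe]
    rw [hB.continuousLinearEquivOfBilin_apply]
    simp
  have : IsUnit ((e : X →L[ℝ] X)) := ⟨e.toUnit, rfl⟩
  rwa [hTe] at this

lemma aux_B_facts {Q : X →L[ℝ] X} (hsa : IsSelfAdjoint Q) (hpos : ∀ z, 0 ≤ ⟪z, Q z⟫)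
    {α : ℝ} (hα : 0 < α) :
    IsSelfAdjoint (α • (Ring.inverse (Q + α • (1 : X →L[ℝ] X)) * Q)) ∧
    (∀ z, 0 ≤ ⟪z, (α • (Ring.inverse (Q + α • (1 : X →L[ℝ] X)) * Q)) z⟫) ∧
    ‖α • (Ring.inverse (Q + α • (1 : X →L[ℝ] X)) * Q)‖ ≤ α := by
  set T := Q + α • (1 : X →L[ℝ] X) with hT
  have hU : IsUnit T := aux_isUnit hpos hα
  set R := Ring.inverse T with hR
  have hRT : R * T = 1 := Ring.inverse_mul_cancel _ hU
  have hTR : T * R = 1 := Ring.mul_inverse_cancel _ hU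
  have hQT : Q * T = T * Q := by
    ext x
    simp [hT, ContinuousLinearMap.mul_apply, ContinuousLinearMap.add_apply,
      ContinuousLinearMap.smul_apply, ContinuousLinearMap.one_apply, map_add, map_smul]
  have hcomm : R * Q = Q * R := by
    calc R * Q = R * Q * (T * R) := by rw [hTR, mul_one]
      _ = R * (Q * T) * R := by simp only [mul_assoc]
      _ = R * (T * Q) * R := by rw [hQT]
      _ = (R * T) * (Q * R) := by simp only [mul_assoc]
      _ = Q * R := by rw [hRT, one_mul]
  have hsT : star T = T := by
    rw [hT, star_add]
    rw [hsa.star_eq]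
    congr 1
    rw [star_smul, star_one, star_trivial]
  have hsR : star R = R := by
    have h1 : star R * T = 1 := by
      rw [← hsT, ← star_mul, hTR, star_one]
    calc star R = star R * (T * R) := by rw [hTR, mul_one]
      _ = (star R * T) * R := by rw [mul_assoc]
      _ = R := by rw [h1, one_mul]
  have hTz : ∀ x, T (R x) = x := by
    intro x
    rw [← ContinuousLinearMap.mul_apply, hTR, ContinuousLinearMap.one_apply]
  have hBx : ∀ x, (α • (R * Q)) x = α • Q (R x) := by
    intro x
    rw [ContinuousLinearMap.smul_apply, hcomm, ContinuousLinearMap.mul_apply]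
  have hTapp : ∀ z : X, T z = Q z + α • z := by
    intro z
    simp [hT, ContinuousLinearMap.add_apply]
  refine ⟨?_, ?_, ?_⟩
  · rw [IsSelfAdjoint, star_smul, star_trivial, star_mul, hsa.star_eq, hsR, hcomm]
  · intro z
    rw [hBx, real_inner_smul_right]
    apply mul_nonneg hα.le
    obtain ⟨w, hw⟩ : ∃ w, w = R z := ⟨R z, rfl⟩
    rw [← hw]
    have hz : z = T w := by rw [hw]; exact (hTz z).symm
    rw [hz, hTapp, inner_add_left, real_inner_smul_left, real_inner_self_eq_norm_sq]
    have := hpos w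
    nlinarith [sq_nonneg ‖Q w‖]
  · refine ContinuousLinearMap.opNorm_le_bound _ hα.le fun x => ?_
    rw [hBx, norm_smul, Real.norm_of_nonneg hα.le]
    have hle : ‖Q (R x)‖ ≤ ‖x‖ := by
      obtain ⟨w, hw⟩ : ∃ w, w = R x := ⟨R x, rfl⟩
      rw [← hw]
      have hx : x = T w := by rw [hw]; exact (hTz x).symm
      have hsq : ‖Q w‖ ^ 2 ≤ ‖x‖ ^ 2 := by
        have h3 : ‖x‖ ^ 2 = ‖Q w + α • w‖ ^ 2 := by rw [hx, hTapp]
        rw [h3, norm_add_sq_real]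
        have h2 : 0 ≤ ⟪Q w, α • w⟫ := by
          rw [real_inner_smul_right, real_inner_comm]
          exact mul_nonneg hα.le (hpos w)
        nlinarith [sq_nonneg ‖α • w‖]
      nlinarith [hsq, norm_nonneg (Q w), norm_nonneg x]
    exact mul_le_mul_of_nonneg_left hle hα.le

lemma aux_conj_facts (F : X →L[ℝ] Y) (L : Y →L[ℝ] Y) (hL : IsSelfAdjoint L)
    (hLpos : ∀ z, 0 ≤ ⟪z, L z⟫) (hLnorm : ‖L‖ ≤ 1) :
    IsSelfAdjoint ((F.adjoint) ∘L (L ∘L F)) ∧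
    (∀ z, 0 ≤ ⟪z, ((F.adjoint) ∘L (L ∘L F)) z⟫) ∧
    ‖(F.adjoint) ∘L (L ∘L F)‖ ≤ ‖F‖ ^ 2 := by
  have hLa : ContinuousLinearMap.adjoint L = L := by
    rw [← ContinuousLinearMap.star_eq_adjoint, hL.star_eq]
  refine ⟨?_, ?_, ?_⟩
  · rw [IsSelfAdjoint, ContinuousLinearMap.star_eq_adjoint,
      ContinuousLinearMap.adjoint_comp, ContinuousLinearMap.adjoint_comp,
      ContinuousLinearMap.adjoint_adjoint, hLa]
    ext x
    simp
  · intro z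
    rw [ContinuousLinearMap.comp_apply, ContinuousLinearMap.comp_apply,
      ContinuousLinearMap.adjoint_inner_right]
    exact hLpos (F z)
  · calc ‖(F.adjoint) ∘L (L ∘L F)‖ ≤ ‖F.adjoint‖ * ‖L ∘L F‖ :=
        ContinuousLinearMap.opNorm_comp_le _ _
      _ ≤ ‖F.adjoint‖ * (‖L‖ * ‖F‖) := by
          apply mul_le_mul_of_nonneg_left (ContinuousLinearMap.opNorm_comp_le _ _)
            (norm_nonneg _)
      _ ≤ ‖F‖ * (1 * ‖F‖) := by
          rw [ContinuousLinearMap.adjoint.norm_map]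
          exact mul_le_mul_of_nonneg_left
            (mul_le_mul_of_nonneg_right hLnorm (norm_nonneg _)) (norm_nonneg _)
      _ = ‖F‖ ^ 2 := by ring

end Aux

/-- Under the Riccati recursion `Q_{k-1} = α (Q_k + α I)⁻¹ Q_k + F_{k-1}* L_{k-1} F_{k-1}`
with `Q_N = F_N* L_N F_N` and `‖L_k‖ ≤ 1`, one has `‖Q_k‖ ≤ α + max_j ‖F_j‖²`. -/
theorem riccati_recursion_norm_bound
    {X Y : Type*} [NormedAddCommGroup X] [InnerProductSpace ℝ X] [CompleteSpace X]
    [NormedAddCommGroup Y] [InnerProductSpace ℝ Y] [CompleteSpace Y]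
    (N : ℕ) (α : ℝ) (hα : 0 < α)
    (F : ℕ → X →L[ℝ] Y) (L : ℕ → Y →L[ℝ] Y)
    (hLsa : ∀ k, IsSelfAdjoint (L k))
    (hLpos : ∀ k (z : Y), 0 ≤ ⟪z, L k z⟫)
    (hLnorm : ∀ k, ‖L k‖ ≤ 1)
    (Q : ℕ → X →L[ℝ] X)
    (hQN : Q N = (F N).adjoint ∘L ((L N) ∘L (F N)))
    (hrec : ∀ k < N, Q k =
      α • (Ring.inverse (Q (k + 1) + α • (1 : X →L[ℝ] X)) * Q (k + 1)) +
        (F k).adjoint ∘L ((L k) ∘L (F k))) :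
    ∀ k ≤ N, ‖Q k‖ ≤ α + (Finset.range (N + 1)).sup'
      (Finset.nonempty_range_iff.mpr (Nat.succ_ne_zero N)) (fun j => ‖F j‖ ^ 2) := by
  set M := (Finset.range (N + 1)).sup'
      (Finset.nonempty_range_iff.mpr (Nat.succ_ne_zero N)) (fun j => ‖F j‖ ^ 2) with hM
  have hFM : ∀ k ≤ N, ‖F k‖ ^ 2 ≤ M := fun k hk =>
    Finset.le_sup' (fun j => ‖F j‖ ^ 2) (Finset.mem_range.mpr (Nat.lt_succ_of_le hk))
  have key : ∀ d k, k + d = N →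
      IsSelfAdjoint (Q k) ∧ (∀ z, 0 ≤ ⟪z, Q k z⟫) ∧ ‖Q k‖ ≤ α + M := by
    intro d
    induction d with
    | zero =>
      intro k hk
      have hkN : k = N := by omega
      obtain ⟨h1, h2, h3⟩ := aux_conj_facts (F k) (L k) (hLsa k) (hLpos k) (hLnorm k)
      rw [hkN, hQN, ← hkN]
      exact ⟨h1, h2, by
        calc ‖(F k).adjoint ∘L (L k ∘L F k)‖ ≤ ‖F k‖ ^ 2 := h3
          _ ≤ M := hFM k (le_of_eq hkN)
          _ ≤ α + M := by linarith⟩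
    | succ d ih =>
      intro k hk
      have hkN : k < N := by omega
      obtain ⟨hsa', hpos', _⟩ := ih (k + 1) (by omega)
      obtain ⟨hB1, hB2, hB3⟩ := aux_B_facts hsa' hpos' hα
      obtain ⟨hC1, hC2, hC3⟩ := aux_conj_facts (F k) (L k) (hLsa k) (hLpos k) (hLnorm k)
      rw [hrec k hkN]
      refine ⟨hB1.add hC1, fun z => ?_, ?_⟩
      · rw [ContinuousLinearMap.add_apply, inner_add_right]
        exact add_nonneg (hB2 z) (hC2 z)
      · calc ‖_ + _‖ ≤ α + ‖F k‖ ^ 2 := le_trans (norm_add_le _ _) (add_le_add hB3 hC3)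
          _ ≤ α + M := by linarith [hFM k hkN.le]
  intro k hk
  exact (key (N - k) k (by omega)).2.2
end

section
/- Let u : [0,T] → X be twice continuously differentiable and satisfy F(t)* L(t) F(t) u(t) - α u''(t) = F(t)* L(t) y(t) for all t ∈ [0,T], with u(0) = u_0 and u'(T) = 0. Then u is a minimizer over the affine set {w ∈ H¹((0,T); X) ∩ C²: w(0) = u_0} of the Tikhonov functional J(w) = ½ ∫_0^T ⟨F(t)w(t) - y(t), L(t)(F(t)w(t) - y(t))⟩ + α ‖w'(t)‖² dt. -/
open scoped RealInnerProductSpace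

/-- A twice continuously differentiable solution of the Euler–Lagrange equation
`F(t)* L(t) F(t) u(t) - α u''(t) = F(t)* L(t) y(t)` on `[0,T]` with `u(0) = u₀` and
`u'(T) = 0` minimizes the Tikhonov functional
`J(w) = ½∫₀ᵀ ⟨F w - y, L (F w - y)⟩ + α‖w'‖² dt` over smooth `w` with `w(0) = u₀`. -/
theorem EulerLagrange_implies_Tikhonov_minimizer
    {X Y : Type*} [NormedAddCommGroup X] [InnerProductSpace ℝ X] [CompleteSpace X]
    [NormedAddCommGroup Y] [InnerProductSpace ℝ Y] [CompleteSpace Y]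
    (T : ℝ) (hT : 0 < T) (α : ℝ) (hα : 0 < α)
    (F : ℝ → X →L[ℝ] Y) (L : ℝ → Y →L[ℝ] Y) (y : ℝ → Y)
    (hF : Continuous F) (hL : Continuous L) (hy : Continuous y)
    (hLsa : ∀ t, IsSelfAdjoint (L t))
    (hLpos : ∀ t (z : Y), 0 ≤ ⟪z, L t z⟫)
    (u₀ : X) (u : ℝ → X) (hu : ContDiff ℝ 2 u)
    (heq : ∀ t ∈ Set.Icc (0 : ℝ) T,
      (F t).adjoint ((L t) ((F t) (u t))) - α • deriv (deriv u) t =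
        (F t).adjoint ((L t) (y t)))
    (hu0 : u 0 = u₀) (huT : deriv u T = 0) :
    let J : (ℝ → X) → ℝ := fun w =>
      (1 / 2) * ∫ t in (0 : ℝ)..T,
        (⟪(F t) (w t) - y t, (L t) ((F t) (w t) - y t)⟫ + α * ‖deriv w t‖ ^ 2)
    ∀ w : ℝ → X, ContDiff ℝ 1 w → w 0 = u₀ → J u ≤ J w := by
  intro J w hw hw0
  -- basic regularity facts
  have hcu : Continuous u := hu.continuous
  have hdu : Differentiable ℝ u := hu.differentiable (by norm_num)
  have hu1 : ContDiff ℝ 1 (deriv u) := by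
    have h2 : ContDiff ℝ ((1 : ℕ) + 1) u := by exact_mod_cast hu
    exact (contDiff_succ_iff_deriv.mp h2).2.2
  have hcu' : Continuous (deriv u) := hu1.continuous
  have hdu' : Differentiable ℝ (deriv u) := hu1.differentiable one_ne_zero
  have hcu'' : Continuous (deriv (deriv u)) := (contDiff_one_iff_deriv.mp hu1).2
  have hdw : Differentiable ℝ w := hw.differentiable one_ne_zero
  have hcw : Continuous w := hw.continuous
  have hcw' : Continuous (deriv w) := (contDiff_one_iff_deriv.mp hw).2
  -- the difference h = w - u
  set h : ℝ → X := fun t => w t - u t with hh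
  have hdh : Differentiable ℝ h := hdw.sub hdu
  have hch : Continuous h := hcw.sub hcu
  have hderh : ∀ t, deriv h t = deriv w t - deriv u t := fun t =>
    deriv_sub (hdw t) (hdu t)
  have hch' : Continuous (deriv h) := by
    have : deriv h = fun t => deriv w t - deriv u t := funext hderh
    rw [this]; exact hcw'.sub hcu'
  have hh0 : h 0 = 0 := by simp [hh, hw0, hu0]
  -- the boundary term function g and its derivative g'
  set g' : ℝ → ℝ := fun t => ⟪deriv u t, deriv h t⟫ + ⟪deriv (deriv u) t, h t⟫ with hg'
  have hgderiv : ∀ t : ℝ, HasDerivAt (fun s => ⟪deriv u s, h s⟫) (g' t) t := fun t =>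
    HasDerivAt.inner ℝ ((hdu' t).hasDerivAt) ((hdh t).hasDerivAt)
  have hcg' : Continuous g' := (hcu'.inner hch').add (hcu''.inner hch)
  have hintg' : (∫ t in (0:ℝ)..T, g' t) = 0 := by
    rw [intervalIntegral.integral_eq_sub_of_hasDerivAt (fun t _ => hgderiv t)
      (hcg'.intervalIntegrable 0 T)]
    simp [huT, hh0]
  -- the three integrands
  set iu : ℝ → ℝ := fun t =>
    ⟪(F t) (u t) - y t, (L t) ((F t) (u t) - y t)⟫ + α * ‖deriv u t‖ ^ 2 with hiu
  set iw : ℝ → ℝ := fun t =>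
    ⟪(F t) (w t) - y t, (L t) ((F t) (w t) - y t)⟫ + α * ‖deriv w t‖ ^ 2 with hiw
  set q : ℝ → ℝ := fun t =>
    ⟪(F t) (h t), (L t) ((F t) (h t))⟫ + α * ‖deriv h t‖ ^ 2 with hq
  -- continuity of the integrands
  have hcFu : Continuous fun t => (F t) (u t) := hF.clm_apply hcu
  have hcFw : Continuous fun t => (F t) (w t) := hF.clm_apply hcw
  have hcFh : Continuous fun t => (F t) (h t) := hF.clm_apply hch
  have hciu : Continuous iu :=
    ((hcFu.sub hy).inner (hL.clm_apply (hcFu.sub hy))).add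
      (continuous_const.mul ((hcu'.norm).pow 2))
  have hciw : Continuous iw :=
    ((hcFw.sub hy).inner (hL.clm_apply (hcFw.sub hy))).add
      (continuous_const.mul ((hcw'.norm).pow 2))
  have hcq : Continuous q :=
    (hcFh.inner (hL.clm_apply hcFh)).add
      (continuous_const.mul ((hch'.norm).pow 2))
  -- pointwise identity on [0, T]
  have key : ∀ t ∈ Set.Icc (0:ℝ) T, iw t = iu t + (2 * α) * g' t + q t := by
    intro t ht
    set a : Y := (F t) (u t) - y t with ha
    set b : Y := (F t) (h t) with hb
    have fact1 : (F t) (w t) - y t = b + a := by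
      simp only [hb, ha, hh, map_sub]; abel
    have fact2 : (F t).adjoint ((L t) a) = α • deriv (deriv u) t := by
      have h1 := heq t ht
      rw [sub_eq_iff_eq_add] at h1
      simp only [ha, map_sub, h1]; abel
    have fact3 : ⟪b, (L t) a⟫ = α * ⟪deriv (deriv u) t, h t⟫ := by
      rw [hb, ← ContinuousLinearMap.adjoint_inner_right, fact2,
        real_inner_smul_right, real_inner_comm]
    have fact4 : ⟪a, (L t) b⟫ = ⟪b, (L t) a⟫ := by
      conv_lhs => rw [← (hLsa t).adjoint_eq]
      rw [ContinuousLinearMap.adjoint_inner_right, real_inner_comm]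
    have fact5 : deriv w t = deriv u t + deriv h t := by rw [hderh]; abel
    have fact6 : ‖deriv w t‖ ^ 2 =
        ‖deriv u t‖ ^ 2 + 2 * ⟪deriv u t, deriv h t⟫ + ‖deriv h t‖ ^ 2 := by
      rw [fact5, @norm_add_sq_real]
    have fact7 : ⟪b + a, (L t) (b + a)⟫
        = ⟪b, (L t) b⟫ + ⟪b, (L t) a⟫ + ⟪a, (L t) b⟫ + ⟪a, (L t) a⟫ := by
      rw [map_add, inner_add_left, inner_add_right, inner_add_right]; ring
    simp only [hiw, hiu, hq, hg', fact1, fact7, fact4, fact3, fact6]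
    ring
  -- integrate the identity
  have hIccEq : Set.uIcc (0:ℝ) T = Set.Icc 0 T := Set.uIcc_of_le hT.le
  have hint1 : IntervalIntegrable iu MeasureTheory.volume 0 T :=
    hciu.intervalIntegrable 0 T
  have hint2 : IntervalIntegrable (fun t => (2 * α) * g' t) MeasureTheory.volume 0 T :=
    (continuous_const.mul hcg').intervalIntegrable 0 T
  have hint3 : IntervalIntegrable q MeasureTheory.volume 0 T :=
    hcq.intervalIntegrable 0 T
  have hsplit : (∫ t in (0:ℝ)..T, iw t)
      = (∫ t in (0:ℝ)..T, iu t) + (∫ t in (0:ℝ)..T, (2 * α) * g' t)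
        + (∫ t in (0:ℝ)..T, q t) := by
    rw [← intervalIntegral.integral_add hint1 hint2,
      ← intervalIntegral.integral_add (hint1.add hint2) hint3]
    apply intervalIntegral.integral_congr
    intro t ht
    rw [hIccEq] at ht
    exact key t ht
  have hmid : (∫ t in (0:ℝ)..T, (2 * α) * g' t) = 0 := by
    rw [intervalIntegral.integral_const_mul, hintg', mul_zero]
  have hqnn : 0 ≤ ∫ t in (0:ℝ)..T, q t := by
    apply intervalIntegral.integral_nonneg hT.le
    intro t _
    have h1 := hLpos t ((F t) (h t))
    have h2 : 0 ≤ α * ‖deriv h t‖ ^ 2 := by positivity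
    simp only [hq]; linarith
  have hfinal : (∫ t in (0:ℝ)..T, iu t) ≤ ∫ t in (0:ℝ)..T, iw t := by
    rw [hsplit, hmid]; linarith
  simp only [J, hiu, hiw] at *
  linarith
end

section
/- Let Q, b, u be continuously differentiable maps on [0,T] with values in L(X), X, X respectively, satisfying Q'(t) = Q(t)* M(t)^{-1} Q(t) - F(t)* L(t) F(t), b'(t) = Q(t)* M(t)^{-1} b(t) + F(t)* L(t) y(t), u'(t) = -M(t)^{-1}(Q(t) u(t) + b(t)), with Q(T) = 0 and b(T) = 0. Then u satisfies the second-order equation F(t)* L(t) F(t) u(t) - (M u')'(t) = F(t)* L(t) y(t) on [0,T] and u'(T) = 0. -/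
open scoped RealInnerProductSpace

set_option maxHeartbeats 1000000 in
/-- If `Q, b, u` solve the Riccati system
`Q' = Q* M⁻¹ Q - F* L F`, `b' = Q* M⁻¹ b + F* L y`, `u' = -M⁻¹(Q u + b)` with
`Q(T) = 0`, `b(T) = 0`, then `u` satisfies `F* L F u - (M u')' = F* L y` and `u'(T) = 0`. -/
theorem riccati_system_gives_second_order_equation
    {X Y : Type*} [NormedAddCommGroup X] [InnerProductSpace ℝ X] [CompleteSpace X]
    [NormedAddCommGroup Y] [InnerProductSpace ℝ Y] [CompleteSpace Y]
    (T : ℝ)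
    (F : ℝ → X →L[ℝ] Y) (L : ℝ → Y →L[ℝ] Y) (M Minv : ℝ → X →L[ℝ] X) (y : ℝ → Y)
    (hF : Continuous F) (hL : Continuous L) (hM : Continuous M) (hy : Continuous y)
    (hLsa : ∀ t, IsSelfAdjoint (L t)) (hMsa : ∀ t, IsSelfAdjoint (M t))
    (hMinv₁ : ∀ t, (M t) ∘L (Minv t) = 1) (hMinv₂ : ∀ t, (Minv t) ∘L (M t) = 1)
    (Q : ℝ → X →L[ℝ] X) (b : ℝ → X) (u : ℝ → X)
    (hQ : ∀ t : ℝ, HasDerivAt Q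
      ((Q t).adjoint ∘L ((Minv t) ∘L (Q t)) - (F t).adjoint ∘L ((L t) ∘L (F t))) t)
    (hb : ∀ t : ℝ, HasDerivAt b
      ((Q t).adjoint ((Minv t) (b t)) + (F t).adjoint ((L t) (y t))) t)
    (hu : ∀ t : ℝ, HasDerivAt u (-(Minv t) ((Q t) (u t) + b t)) t)
    (hQT : Q T = 0) (hbT : b T = 0) :
    let du : ℝ → X := fun t => -(Minv t) ((Q t) (u t) + b t)
    (∀ t : ℝ, HasDerivAt (fun s => (M s) (du s))
      ((F t).adjoint ((L t) ((F t) (u t))) - (F t).adjoint ((L t) (y t))) t) ∧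
    du T = 0 := by
  intro du
  -- Minv is self-adjoint
  have hMinv_sa : ∀ t, (Minv t).adjoint = Minv t := by
    intro t
    have h1 : (Minv t).adjoint ∘L (M t).adjoint = 1 := by
      rw [← ContinuousLinearMap.adjoint_comp, hMinv₁ t, ContinuousLinearMap.one_def,
        ContinuousLinearMap.adjoint_id]
    rw [(hMsa t).adjoint_eq] at h1
    calc (Minv t).adjoint = (Minv t).adjoint ∘L ((M t) ∘L (Minv t)) := by
          rw [hMinv₁ t, ContinuousLinearMap.one_def, ContinuousLinearMap.comp_id]
      _ = ((Minv t).adjoint ∘L (M t)) ∘L (Minv t) := by rw [ContinuousLinearMap.comp_assoc]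
      _ = Minv t := by rw [h1, ContinuousLinearMap.one_def, ContinuousLinearMap.id_comp]
  -- Q' t is self-adjoint
  have hQ'sa : ∀ t, ((Q t).adjoint ∘L ((Minv t) ∘L (Q t))
      - (F t).adjoint ∘L ((L t) ∘L (F t))).adjoint
      = (Q t).adjoint ∘L ((Minv t) ∘L (Q t)) - (F t).adjoint ∘L ((L t) ∘L (F t)) := by
    intro t
    simp only [map_sub, ContinuousLinearMap.adjoint_comp, ContinuousLinearMap.adjoint_adjoint,
      hMinv_sa t, (hLsa t).adjoint_eq]
    rw [ContinuousLinearMap.comp_assoc, ContinuousLinearMap.comp_assoc]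
  have hadjQ : ∀ t : ℝ, HasDerivAt (fun s => (Q s).adjoint - Q s) 0 t := by
    intro t
    have h1 : HasDerivAt (fun s => (Q s).adjoint)
        ((Q t).adjoint ∘L ((Minv t) ∘L (Q t)) - (F t).adjoint ∘L ((L t) ∘L (F t))).adjoint t :=
      (ContinuousLinearMap.adjoint (𝕜 := ℝ) (E := X)
        (F := X)).toContinuousLinearEquiv.toContinuousLinearMap.hasFDerivAt.comp_hasDerivAt t (hQ t)
    have h2 := h1.sub (hQ t)
    rw [hQ'sa t, sub_self] at h2
    exact h2
  -- Q is self-adjoint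
  have hQsa : ∀ t, (Q t).adjoint = Q t := by
    intro t
    have hc : (Q t).adjoint - Q t = (Q T).adjoint - Q T :=
      is_const_of_deriv_eq_zero (f := fun s => (Q s).adjoint - Q s)
        (fun s => (hadjQ s).differentiableAt) (fun s => (hadjQ s).deriv) t T
    rw [hQT] at hc
    simp only [map_zero, sub_zero, sub_eq_zero] at hc
    exact hc
  refine ⟨fun t => ?_, ?_⟩
  · have heq : (fun s => (M s) (du s)) = fun s => -((Q s) (u s) + b s) := by
      funext s
      have h1 : ∀ x : X, (M s) ((Minv s) x) = x := by
        intro x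
        have := congrArg (fun (A : X →L[ℝ] X) => A x) (hMinv₁ s)
        simpa using this
      show (M s) (-(Minv s) ((Q s) (u s) + b s)) = _
      rw [map_neg, h1]
    rw [heq]
    have hd := (((hQ t).clm_apply (hu t)).add (hb t)).neg
    have key : -((((Q t).adjoint ∘L ((Minv t) ∘L (Q t))
          - (F t).adjoint ∘L ((L t) ∘L (F t))) (u t)
          + (Q t) (-(Minv t) ((Q t) (u t) + b t)))
          + ((Q t).adjoint ((Minv t) (b t)) + (F t).adjoint ((L t) (y t))))
        = (F t).adjoint ((L t) ((F t) (u t))) - (F t).adjoint ((L t) (y t)) := by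
      simp only [ContinuousLinearMap.sub_apply, ContinuousLinearMap.comp_apply, map_add,
        map_neg, hQsa t]
      abel
    exact key ▸ hd
  · show -(Minv T) ((Q T) (u T) + b T) = 0
    rw [hQT, hbT]
    simp
end

section
/- Let α > 0, Δt > 0, and F_k : X → Y bounded linear operators with α^{-1}(Δt)² max_k ‖F_k‖² ≤ ½. Define the explicit Euler iteration Q_{k-1} = Q_k - Δt(-α^{-1} F_k* F_k + Q_k² ) backwards from Q_n = 0. Then each Q_k is self-adjoint positive semi-definite and satisfies Δt ‖Q_k‖ ≤ 1, i.e. Δt ≤ ‖Q_k‖^{-1} whenever Q_k ≠ 0. -/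
open scoped RealInnerProductSpace

/-- Cauchy–Schwarz style inequality for positive self-adjoint operators:
`‖S x‖² ≤ ‖S‖ ⟪x, S x⟫`. -/
lemma aux_cs {X : Type*} [NormedAddCommGroup X] [InnerProductSpace ℝ X] [CompleteSpace X]
    (S : X →L[ℝ] X) (hS : IsSelfAdjoint S) (hpos : ∀ x : X, 0 ≤ ⟪x, S x⟫) (x : X) :
    ‖S x‖ ^ 2 ≤ ‖S‖ * ⟪x, S x⟫ := by
  by_cases hSx : S x = 0
  · simp [hSx]
  have hSnorm : 0 < ‖S‖ := by
    by_contra h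
    push_neg at h
    have : S = 0 := by
      ext y; simpa using norm_le_zero_iff.mp (le_trans (S.le_opNorm y)
        (by nlinarith [norm_nonneg y]))
    exact hSx (by simp [this])
  set t : ℝ := ‖S‖⁻¹ with ht
  have h1 : (0:ℝ) ≤ ⟪x - t • S x, S (x - t • S x)⟫ := hpos _
  have hsym := hS.isSymmetric
  have e1 : ⟪x, S (S x)⟫ = ‖S x‖ ^ 2 := by
    have h := ContinuousLinearMap.adjoint_inner_right S x (S x)
    rw [hS.adjoint_eq] at h
    rw [h]
    exact real_inner_self_eq_norm_sq _
  have e2 : ⟪S x, S (S x)⟫ ≤ ‖S‖ * ‖S x‖ ^ 2 := by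
    calc ⟪S x, S (S x)⟫ ≤ ‖S x‖ * ‖S (S x)‖ := real_inner_le_norm _ _
      _ ≤ ‖S x‖ * (‖S‖ * ‖S x‖) := by
          exact mul_le_mul_of_nonneg_left (S.le_opNorm _) (norm_nonneg _)
      _ = ‖S‖ * ‖S x‖ ^ 2 := by ring
  have expand : ⟪x - t • S x, S (x - t • S x)⟫
      = ⟪x, S x⟫ - t * ⟪x, S (S x)⟫ - t * ⟪S x, S x⟫ + t ^ 2 * ⟪S x, S (S x)⟫ := by
    simp only [map_sub, map_smul, inner_sub_left, inner_sub_right, inner_smul_left,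
      inner_smul_right, RCLike.star_def, starRingEnd_apply, star_trivial]
    ring
  have e3 : ⟪S x, S x⟫ = ‖S x‖ ^ 2 := real_inner_self_eq_norm_sq _
  have htS : t * ‖S‖ = 1 := inv_mul_cancel₀ (ne_of_gt hSnorm)
  have ht0 : 0 < t := inv_pos.mpr hSnorm
  rw [expand, e1, e3] at h1
  have h2 : t ^ 2 * ⟪S x, S (S x)⟫ ≤ t * ‖S x‖ ^ 2 := by
    calc t ^ 2 * ⟪S x, S (S x)⟫ ≤ t ^ 2 * (‖S‖ * ‖S x‖ ^ 2) :=
          mul_le_mul_of_nonneg_left e2 (sq_nonneg t)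
      _ = (t * ‖S‖) * (t * ‖S x‖ ^ 2) := by ring
      _ = t * ‖S x‖ ^ 2 := by rw [htS]; ring
  have h3 : t * ‖S x‖ ^ 2 ≤ ⟪x, S x⟫ := by linarith
  have h4 := mul_le_mul_of_nonneg_left h3 hSnorm.le
  calc ‖S x‖ ^ 2 = ‖S‖ * (t * ‖S x‖ ^ 2) := by
        rw [← mul_assoc, mul_comm ‖S‖ t, htS, one_mul]
    _ ≤ ‖S‖ * ⟪x, S x⟫ := h4

/-- A positive self-adjoint operator whose quadratic form is bounded by `c‖x‖²`
has norm at most `c`. -/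
lemma aux_norm {X : Type*} [NormedAddCommGroup X] [InnerProductSpace ℝ X] [CompleteSpace X]
    (T : X →L[ℝ] X) (hT : IsSelfAdjoint T) (hpos : ∀ x : X, 0 ≤ ⟪x, T x⟫)
    (c : ℝ) (hc : 0 ≤ c) (hub : ∀ x : X, ⟪x, T x⟫ ≤ c * ‖x‖ ^ 2) : ‖T‖ ≤ c := by
  have key : ∀ x : X, ‖T x‖ ^ 2 ≤ (‖T‖ * c) * ‖x‖ ^ 2 := by
    intro x
    calc ‖T x‖ ^ 2 ≤ ‖T‖ * ⟪x, T x⟫ := aux_cs T hT hpos x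
      _ ≤ ‖T‖ * (c * ‖x‖ ^ 2) := mul_le_mul_of_nonneg_left (hub x) (norm_nonneg _)
      _ = (‖T‖ * c) * ‖x‖ ^ 2 := by ring
  have hb : ‖T‖ ≤ Real.sqrt (‖T‖ * c) := by
    apply T.opNorm_le_bound (Real.sqrt_nonneg _)
    intro x
    have h1 : ‖T x‖ = Real.sqrt (‖T x‖ ^ 2) := (Real.sqrt_sq (norm_nonneg _)).symm
    rw [h1]
    calc Real.sqrt (‖T x‖ ^ 2) ≤ Real.sqrt ((‖T‖ * c) * ‖x‖ ^ 2) :=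
          Real.sqrt_le_sqrt (key x)
      _ = Real.sqrt (‖T‖ * c) * ‖x‖ := by
          rw [Real.sqrt_mul (by positivity), Real.sqrt_sq (norm_nonneg _)]
  have hsq : ‖T‖ ^ 2 ≤ ‖T‖ * c := by
    have := Real.sq_sqrt (show (0:ℝ) ≤ ‖T‖ * c by positivity)
    nlinarith [norm_nonneg T, Real.sqrt_nonneg (‖T‖ * c)]
  nlinarith [norm_nonneg T]

set_option maxHeartbeats 1000000 in
/-- Under the CFL condition `α⁻¹(Δt)² max_k ‖F_k‖² ≤ ½`, the explicit Euler iteration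
`Q_{k-1} = Q_k - Δt(-α⁻¹ F_k* F_k + Q_k²)` backwards from `Q_n = 0` produces self-adjoint
positive semi-definite operators satisfying `Δt‖Q_k‖ ≤ 1`. -/
theorem explicit_Euler_CFL_stability
    {X Y : Type*} [NormedAddCommGroup X] [InnerProductSpace ℝ X] [CompleteSpace X]
    [NormedAddCommGroup Y] [InnerProductSpace ℝ Y] [CompleteSpace Y]
    (n : ℕ) (α Δt : ℝ) (hα : 0 < α) (hΔt : 0 < Δt)
    (F : ℕ → X →L[ℝ] Y)
    (hCFL : ∀ k, α⁻¹ * Δt ^ 2 * ‖F k‖ ^ 2 ≤ 1 / 2)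
    (Q : ℕ → X →L[ℝ] X)
    (hQn : Q n = 0)
    (hrec : ∀ k < n, Q k = Q (k + 1) -
      Δt • (Q (k + 1) * Q (k + 1) - α⁻¹ • ((F (k + 1)).adjoint ∘L (F (k + 1))))) :
    ∀ k ≤ n, IsSelfAdjoint (Q k) ∧ (∀ x : X, 0 ≤ ⟪x, Q k x⟫) ∧ Δt * ‖Q k‖ ≤ 1 := by
  intro k hk
  refine Nat.decreasingInduction'
    (P := fun k => IsSelfAdjoint (Q k) ∧ (∀ x : X, 0 ≤ ⟪x, Q k x⟫) ∧ Δt * ‖Q k‖ ≤ 1)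
    (fun j hjn _ ih => ?_) hk ?_
  case refine_2 =>
    refine ⟨by rw [hQn]; simp, ?_, ?_⟩
    · intro x; simp [hQn]
    · simp [hQn]
  case refine_1 =>
    obtain ⟨hA, hApos, hAnorm⟩ := ih
    set A := Q (j + 1) with hAdef
    set G := F (j + 1) with hGdef
    have hrecj := hrec j hjn
    -- Self-adjointness
    have hGsa : IsSelfAdjoint (G.adjoint ∘L G) := by
      rw [ContinuousLinearMap.isSelfAdjoint_iff']
      rw [ContinuousLinearMap.adjoint_comp, ContinuousLinearMap.adjoint_adjoint]
    have hAA : IsSelfAdjoint (A * A) := by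
      rw [IsSelfAdjoint, star_mul, hA.star_eq]
    have hsa : IsSelfAdjoint (Q j) := by
      rw [hrecj]
      exact hA.sub ((IsSelfAdjoint.all Δt).smul
        (hAA.sub ((IsSelfAdjoint.all α⁻¹).smul hGsa)))
    -- quadratic form computation
    have hform : ∀ x : X, ⟪x, Q j x⟫
        = ⟪x, A x⟫ - Δt * (‖A x‖ ^ 2 - α⁻¹ * ‖G x‖ ^ 2) := by
      intro x
      rw [hrecj]
      simp only [ContinuousLinearMap.sub_apply, ContinuousLinearMap.smul_apply,
        ContinuousLinearMap.mul_apply, ContinuousLinearMap.coe_comp', Function.comp_apply,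
        inner_sub_right, inner_smul_right]
      have e1 : ⟪x, A (A x)⟫ = ‖A x‖ ^ 2 := by
        have h := ContinuousLinearMap.adjoint_inner_right A x (A x)
        rw [hA.adjoint_eq] at h
        rw [h]
        exact real_inner_self_eq_norm_sq _
      have e2 : ⟪x, G.adjoint (G x)⟫ = ‖G x‖ ^ 2 := by
        rw [ContinuousLinearMap.adjoint_inner_right, real_inner_self_eq_norm_sq]
      rw [e1, e2]
    have hcs := fun x => aux_cs A hA hApos x
    -- positivity
    have hpos : ∀ x : X, 0 ≤ ⟪x, Q j x⟫ := by
      intro x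
      rw [hform x]
      have h1 : Δt * ‖A x‖ ^ 2 ≤ Δt * (‖A‖ * ⟪x, A x⟫) :=
        mul_le_mul_of_nonneg_left (hcs x) hΔt.le
      have h2 : Δt * ‖A‖ * ⟪x, A x⟫ ≤ 1 * ⟪x, A x⟫ :=
        mul_le_mul_of_nonneg_right hAnorm (hApos x)
      have h3 : 0 ≤ α⁻¹ * ‖G x‖ ^ 2 := by positivity
      nlinarith
    -- upper bound on quadratic form
    have hub : ∀ x : X, ⟪x, Q j x⟫ ≤ Δt⁻¹ * ‖x‖ ^ 2 := by
      intro x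
      rw [hform x]
      have h1 : ⟪x, A x⟫ ≤ ‖x‖ * ‖A x‖ := real_inner_le_norm _ _
      have h2 : ‖G x‖ ≤ ‖G‖ * ‖x‖ := G.le_opNorm x
      have hcfl := hCFL (j + 1)
      have h3 : α⁻¹ * ‖G x‖ ^ 2 ≤ α⁻¹ * (‖G‖ ^ 2 * ‖x‖ ^ 2) := by
        apply mul_le_mul_of_nonneg_left _ (by positivity)
        nlinarith [norm_nonneg (G x), norm_nonneg G, norm_nonneg x]
      have h4 : Δt * (α⁻¹ * (‖G‖ ^ 2 * ‖x‖ ^ 2)) ≤ (1/2) * Δt⁻¹ * ‖x‖ ^ 2 := by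
        rw [← hGdef] at hcfl
        have hkey : Δt * (α⁻¹ * ‖G‖ ^ 2) ≤ (1/2) * Δt⁻¹ := by
          have hne : Δt ≠ 0 := ne_of_gt hΔt
          calc Δt * (α⁻¹ * ‖G‖ ^ 2) = (α⁻¹ * Δt ^ 2 * ‖G‖ ^ 2) * Δt⁻¹ := by
                field_simp
            _ ≤ (1/2) * Δt⁻¹ := mul_le_mul_of_nonneg_right hcfl (by positivity)
        calc Δt * (α⁻¹ * (‖G‖ ^ 2 * ‖x‖ ^ 2)) = (Δt * (α⁻¹ * ‖G‖ ^ 2)) * ‖x‖ ^ 2 := by ring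
          _ ≤ (1/2) * Δt⁻¹ * ‖x‖ ^ 2 := mul_le_mul_of_nonneg_right hkey (sq_nonneg _)
      -- ⟪x,Ax⟫ - Δt‖Ax‖² ≤ ‖x‖‖Ax‖ - Δt‖Ax‖² ≤ ‖x‖²/(4Δt)
      have h5 : ‖x‖ * ‖A x‖ - Δt * ‖A x‖ ^ 2 ≤ (1/4) * Δt⁻¹ * ‖x‖ ^ 2 := by
        have hΔne : Δt ≠ 0 := ne_of_gt hΔt
        have hq : (0:ℝ) ≤ Δt * (‖A x‖ - Δt⁻¹ * ‖x‖ / 2) ^ 2 := by positivity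
        have hq2 : Δt * (‖A x‖ - Δt⁻¹ * ‖x‖ / 2) ^ 2
            = Δt * ‖A x‖ ^ 2 - ‖x‖ * ‖A x‖ + (1/4) * Δt⁻¹ * ‖x‖ ^ 2 := by
          field_simp
          ring
        rw [hq2] at hq
        linarith
      have h6 : Δt * (α⁻¹ * ‖G x‖ ^ 2) ≤ Δt * (α⁻¹ * (‖G‖ ^ 2 * ‖x‖ ^ 2)) :=
        mul_le_mul_of_nonneg_left h3 hΔt.le
      have h7 : (0:ℝ) ≤ Δt⁻¹ * ‖x‖ ^ 2 := by positivity
      linarith [h1, h4, h5, h6, h7]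
    have hnorm : ‖Q j‖ ≤ Δt⁻¹ := aux_norm (Q j) hsa hpos Δt⁻¹ (by positivity) hub
    refine ⟨hsa, hpos, ?_⟩
    calc Δt * ‖Q j‖ ≤ Δt * Δt⁻¹ := mul_le_mul_of_nonneg_left hnorm hΔt.le
      _ = 1 := mul_inv_cancel₀ (ne_of_gt hΔt)
end

section
/- Consider sequences in a Hilbert space X with the dynamic u_{k+1} = u_k + v_k. For N ≥ 1 and k ∈ {0,…,N-1}, the Bellman principle holds: V(k,ξ) = min_{v ∈ X} { V(k+1, ξ+v) + ½⟨F_k ξ - y_k, L_k(F_k ξ - y_k)⟩ + (α/2)‖v‖² }, where V(k,ξ) := inf over all controls (v_k,…,v_{N-1}) ∈ X^{N-k} of J_k with u_k = ξ, and J_k(u,v) = ½[⟨F_N u_N - y_N, L_N(F_N u_N - y_N)⟩ + Σ_{j=k}^{N-1} ⟨F_j u_j - y_j, L_j(F_j u_j - y_j)⟩ + α‖v_j‖²]. -/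
open scoped RealInnerProductSpace
set_option linter.unusedSectionVars false

/-- Trajectory of the dynamic `u_{k+1} = u_k + v_k` starting at `ξ` at time `k`. -/
noncomputable def bellmanTraj {X : Type*} [NormedAddCommGroup X]
    (ξ : X) (k : ℕ) (v : ℕ → X) (j : ℕ) : X :=
  ξ + ∑ i ∈ Finset.Ico k j, v i

/-- The cost-to-go `J_k(u,v)` for the discrete control problem, with trajectory starting
at `ξ` at time `k` driven by the controls `v`. -/
noncomputable def bellmanCost {X Y : Type*}
    [NormedAddCommGroup X] [InnerProductSpace ℝ X]
    [NormedAddCommGroup Y] [InnerProductSpace ℝ Y]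
    (N : ℕ) (α : ℝ) (F : ℕ → X →L[ℝ] Y) (L : ℕ → Y →L[ℝ] Y) (y : ℕ → Y)
    (k : ℕ) (ξ : X) (v : ℕ → X) : ℝ :=
  (1 / 2) * (⟪(F N) (bellmanTraj ξ k v N) - y N,
      (L N) ((F N) (bellmanTraj ξ k v N) - y N)⟫ +
    ∑ j ∈ Finset.Ico k N,
      (⟪(F j) (bellmanTraj ξ k v j) - y j, (L j) ((F j) (bellmanTraj ξ k v j) - y j)⟫ +
        α * ‖v j‖ ^ 2))

/-- The value function `V(k,ξ)`: the infimum of the cost-to-go over all controls. -/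
noncomputable def bellmanValue {X Y : Type*}
    [NormedAddCommGroup X] [InnerProductSpace ℝ X]
    [NormedAddCommGroup Y] [InnerProductSpace ℝ Y]
    (N : ℕ) (α : ℝ) (F : ℕ → X →L[ℝ] Y) (L : ℕ → Y →L[ℝ] Y) (y : ℕ → Y)
    (k : ℕ) (ξ : X) : ℝ :=
  ⨅ v : ℕ → X, bellmanCost N α F L y k ξ v

section
variable {X Y : Type*}
    [NormedAddCommGroup X] [InnerProductSpace ℝ X]
    [NormedAddCommGroup Y] [InnerProductSpace ℝ Y]

lemma bell_sym [CompleteSpace Y] (L : Y →L[ℝ] Y) (hs : IsSelfAdjoint L) (a b : Y) :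
    ⟪a, L b⟫ = ⟪b, L a⟫ := by
  have := hs.isSymmetric a b
  simp only [ContinuousLinearMap.coe_coe] at this
  rw [← this, real_inner_comm]

lemma bell_quad_mid [CompleteSpace Y] (L : Y →L[ℝ] Y) (hs : IsSelfAdjoint L) (a b : Y) :
    ⟪(2⁻¹:ℝ) • (a + b), L ((2⁻¹:ℝ) • (a + b))⟫
      = (⟪a, L a⟫ + ⟪b, L b⟫) / 2 - (1/4) * ⟪a - b, L (a - b)⟫ := by
  simp only [map_add, map_sub, map_smul, inner_add_left, inner_add_right,
    inner_sub_left, inner_sub_right, real_inner_smul_left, real_inner_smul_right,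
    bell_sym L hs a b]
  ring

lemma bell_norm_mid (a b : X) :
    ‖(2⁻¹:ℝ) • (a + b)‖^2 = (‖a‖^2 + ‖b‖^2)/2 - (1/4) * ‖a - b‖^2 := by
  rw [norm_smul]
  have h1 := norm_add_sq_real a b
  have h2 := norm_sub_sq_real a b
  simp only [Real.norm_eq_abs]
  rw [abs_of_pos (by norm_num : (0:ℝ) < 2⁻¹), mul_pow]
  nlinarith [h1, h2]

lemma bell_traj_start {ξ : X} {k : ℕ} {v : ℕ → X} : bellmanTraj ξ k v k = ξ := by
  simp [bellmanTraj]

lemma bell_traj_succ {ξ : X} {k j : ℕ} (h : k < j) (v : ℕ → X) :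
    bellmanTraj ξ k v j = bellmanTraj (ξ + v k) (k+1) v j := by
  simp only [bellmanTraj, Finset.sum_eq_sum_Ico_succ_bot h, add_assoc]

lemma bell_traj_congr {ξ : X} {k j N : ℕ} (hj : j ≤ N) {v w : ℕ → X}
    (h : ∀ i ∈ Finset.Ico k N, v i = w i) :
    bellmanTraj ξ k v j = bellmanTraj ξ k w j := by
  unfold bellmanTraj
  congr 1
  refine Finset.sum_congr rfl fun i hi => h i ?_
  simp only [Finset.mem_Ico] at hi ⊢
  exact ⟨hi.1, lt_of_lt_of_le hi.2 hj⟩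

lemma bell_traj_mid {ξ : X} {k j : ℕ} (v w : ℕ → X) :
    bellmanTraj ξ k (fun i => (2⁻¹:ℝ) • (v i + w i)) j
      = (2⁻¹:ℝ) • (bellmanTraj ξ k v j + bellmanTraj ξ k w j) := by
  unfold bellmanTraj
  simp only [smul_add, Finset.sum_add_distrib, ← Finset.smul_sum]
  module

variable (N : ℕ) (α : ℝ) (F : ℕ → X →L[ℝ] Y) (L : ℕ → Y →L[ℝ] Y) (y : ℕ → Y)

lemma bell_cost_nonneg (hα : 0 ≤ α) (hLpos : ∀ k (z : Y), 0 ≤ ⟪z, L k z⟫)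
    (k : ℕ) (ξ : X) (v : ℕ → X) : 0 ≤ bellmanCost N α F L y k ξ v := by
  unfold bellmanCost
  have h1 := hLpos N ((F N) (bellmanTraj ξ k v N) - y N)
  have h2 : 0 ≤ ∑ j ∈ Finset.Ico k N,
      (⟪(F j) (bellmanTraj ξ k v j) - y j, (L j) ((F j) (bellmanTraj ξ k v j) - y j)⟫ +
        α * ‖v j‖ ^ 2) :=
    Finset.sum_nonneg fun j _ => add_nonneg (hLpos j _)
      (mul_nonneg hα (sq_nonneg _))
  linarith

lemma bell_cost_congr {k : ℕ} (ξ : X) {v w : ℕ → X}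
    (h : ∀ i ∈ Finset.Ico k N, v i = w i) :
    bellmanCost N α F L y k ξ v = bellmanCost N α F L y k ξ w := by
  unfold bellmanCost
  rw [bell_traj_congr le_rfl h]
  congr 1
  refine congrArg _ (Finset.sum_congr rfl fun j hj => ?_)
  rw [bell_traj_congr (le_of_lt (Finset.mem_Ico.mp hj).2) h, h j hj]

lemma bell_cost_succ {k : ℕ} (hk : k < N) (ξ : X) (v : ℕ → X) :
    bellmanCost N α F L y k ξ v
      = bellmanCost N α F L y (k+1) (ξ + v k) v
        + (1/2) * ⟪(F k) ξ - y k, (L k) ((F k) ξ - y k)⟫ + (α/2) * ‖v k‖^2 := by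
  unfold bellmanCost
  rw [Finset.sum_eq_sum_Ico_succ_bot hk, bell_traj_start,
    bell_traj_succ hk v]
  have : ∀ j ∈ Finset.Ico (k+1) N, (fun j =>
      ⟪(F j) (bellmanTraj ξ k v j) - y j, (L j) ((F j) (bellmanTraj ξ k v j) - y j)⟫ +
        α * ‖v j‖ ^ 2) j = (fun j =>
      ⟪(F j) (bellmanTraj (ξ + v k) (k+1) v j) - y j,
        (L j) ((F j) (bellmanTraj (ξ + v k) (k+1) v j) - y j)⟫ + α * ‖v j‖ ^ 2) j := by
    intro j hj
    dsimp only
    rw [bell_traj_succ (lt_of_lt_of_le (Nat.lt_succ_self k) (Finset.mem_Ico.mp hj).1) v]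
  rw [Finset.sum_congr rfl this]
  ring

lemma bell_cost_mid [CompleteSpace Y] (hLsa : ∀ k, IsSelfAdjoint (L k))
    (hLpos : ∀ k (z : Y), 0 ≤ ⟪z, L k z⟫) (k : ℕ) (ξ : X) (v w : ℕ → X) :
    bellmanCost N α F L y k ξ (fun i => (2⁻¹:ℝ) • (v i + w i))
      ≤ (bellmanCost N α F L y k ξ v + bellmanCost N α F L y k ξ w)/2
        - (α/8) * ∑ j ∈ Finset.Ico k N, ‖v j - w j‖^2 := by
  have hF : ∀ j, (F j) (bellmanTraj ξ k (fun i => (2⁻¹:ℝ) • (v i + w i)) j) - y j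
      = (2⁻¹:ℝ) • (((F j) (bellmanTraj ξ k v j) - y j)
          + ((F j) (bellmanTraj ξ k w j) - y j)) := by
    intro j
    rw [bell_traj_mid, map_smul, map_add]
    module
  have hq : ∀ j, ⟪(F j) (bellmanTraj ξ k (fun i => (2⁻¹:ℝ) • (v i + w i)) j) - y j,
      (L j) ((F j) (bellmanTraj ξ k (fun i => (2⁻¹:ℝ) • (v i + w i)) j) - y j)⟫
      ≤ (⟪(F j) (bellmanTraj ξ k v j) - y j, (L j) ((F j) (bellmanTraj ξ k v j) - y j)⟫
        + ⟪(F j) (bellmanTraj ξ k w j) - y j,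
            (L j) ((F j) (bellmanTraj ξ k w j) - y j)⟫)/2 := by
    intro j
    rw [hF j, bell_quad_mid (L j) (hLsa j)]
    have h := hLpos j ((F j) (bellmanTraj ξ k v j) - y j
      - ((F j) (bellmanTraj ξ k w j) - y j))
    linarith
  have hsum : ∑ j ∈ Finset.Ico k N,
      (⟪(F j) (bellmanTraj ξ k (fun i => (2⁻¹:ℝ) • (v i + w i)) j) - y j,
        (L j) ((F j) (bellmanTraj ξ k (fun i => (2⁻¹:ℝ) • (v i + w i)) j) - y j)⟫
          + α * ‖(2⁻¹:ℝ) • (v j + w j)‖^2)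
      ≤ ∑ j ∈ Finset.Ico k N,
        (((⟪(F j) (bellmanTraj ξ k v j) - y j, (L j) ((F j) (bellmanTraj ξ k v j) - y j)⟫
            + α * ‖v j‖^2)
          + (⟪(F j) (bellmanTraj ξ k w j) - y j,
              (L j) ((F j) (bellmanTraj ξ k w j) - y j)⟫ + α * ‖w j‖^2))/2
          - (α/4) * ‖v j - w j‖^2) := by
    refine Finset.sum_le_sum fun j _ => ?_
    rw [bell_norm_mid (v j) (w j)]
    linarith [hq j]
  have hre : ∑ j ∈ Finset.Ico k N,
        (((⟪(F j) (bellmanTraj ξ k v j) - y j, (L j) ((F j) (bellmanTraj ξ k v j) - y j)⟫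
            + α * ‖v j‖^2)
          + (⟪(F j) (bellmanTraj ξ k w j) - y j,
              (L j) ((F j) (bellmanTraj ξ k w j) - y j)⟫ + α * ‖w j‖^2))/2
          - (α/4) * ‖v j - w j‖^2)
      = ((∑ j ∈ Finset.Ico k N,
          (⟪(F j) (bellmanTraj ξ k v j) - y j, (L j) ((F j) (bellmanTraj ξ k v j) - y j)⟫
            + α * ‖v j‖^2))
        + (∑ j ∈ Finset.Ico k N,
          (⟪(F j) (bellmanTraj ξ k w j) - y j,
            (L j) ((F j) (bellmanTraj ξ k w j) - y j)⟫ + α * ‖w j‖^2)))/2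
        - (α/4) * ∑ j ∈ Finset.Ico k N, ‖v j - w j‖^2 := by
    rw [Finset.sum_sub_distrib, ← Finset.mul_sum, ← Finset.sum_div, Finset.sum_add_distrib]
  rw [hre] at hsum
  unfold bellmanCost
  simp only [norm_smul] at hsum ⊢
  have hqN := hq N
  linarith [hsum, hqN]

lemma bell_cost_continuous (k : ℕ) (ξ : X) :
    Continuous fun v : ℕ → X => bellmanCost N α F L y k ξ v := by
  have htraj : ∀ j, Continuous fun v : ℕ → X => bellmanTraj ξ k v j := fun j =>
    continuous_const.add (continuous_finset_sum _ fun i _ => continuous_apply i)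
  have hterm : ∀ j, Continuous fun v : ℕ → X =>
      ⟪(F j) (bellmanTraj ξ k v j) - y j, (L j) ((F j) (bellmanTraj ξ k v j) - y j)⟫ := by
    intro j
    have h1 : Continuous fun v : ℕ → X => (F j) (bellmanTraj ξ k v j) - y j :=
      ((F j).continuous.comp (htraj j)).sub continuous_const
    exact h1.inner ((L j).continuous.comp h1)
  unfold bellmanCost
  exact continuous_const.mul ((hterm N).add (continuous_finset_sum _ fun j _ =>
    (hterm j).add (continuous_const.mul ((continuous_apply j).norm.pow 2))))

lemma bell_exists_min [CompleteSpace X] [CompleteSpace Y] (hα : 0 < α)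
    (hLsa : ∀ k, IsSelfAdjoint (L k)) (hLpos : ∀ k (z : Y), 0 ≤ ⟪z, L k z⟫)
    (k : ℕ) (ξ : X) :
    ∃ u : ℕ → X, bellmanCost N α F L y k ξ u
      = ⨅ v : ℕ → X, bellmanCost N α F L y k ξ v := by
  set cst : (ℕ → X) → ℝ := fun v => bellmanCost N α F L y k ξ v with hcst
  have hbdd : BddBelow (Set.range cst) := by
    refine ⟨0, ?_⟩
    rintro _ ⟨v, rfl⟩
    exact bell_cost_nonneg N α F L y hα.le hLpos k ξ v
  set m : ℝ := ⨅ v : ℕ → X, cst v with hm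
  have hm_le : ∀ v, m ≤ cst v := fun v => ciInf_le hbdd v
  have hseq : ∀ n : ℕ, ∃ v, cst v < m + 1/((n:ℝ)+1) := by
    intro n
    refine exists_lt_of_ciInf_lt ?_
    rw [← hm]
    have : (0:ℝ) < 1/((n:ℝ)+1) := by positivity
    linarith
  choose s hs using hseq
  have key : ∀ (n p j : ℕ), j ∈ Finset.Ico k N →
      (α/8) * ‖s n j - s p j‖^2 ≤ (1/((n:ℝ)+1) + 1/((p:ℝ)+1))/2 := by
    intro n p j hj
    have hmid := bell_cost_mid N α F L y hLsa hLpos k ξ (s n) (s p)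
    have h1 : m ≤ cst (fun i => (2⁻¹:ℝ) • (s n i + s p i)) := hm_le _
    have h2 : ‖s n j - s p j‖^2 ≤ ∑ j' ∈ Finset.Ico k N, ‖s n j' - s p j'‖^2 :=
      Finset.single_le_sum (f := fun j' => ‖s n j' - s p j'‖^2) (fun i _ => sq_nonneg _) hj
    have h3 := hs n
    have h4 := hs p
    have hα8 : (0:ℝ) < α/8 := by positivity
    have h5 : (α/8) * ‖s n j - s p j‖^2
        ≤ (α/8) * ∑ j' ∈ Finset.Ico k N, ‖s n j' - s p j'‖^2 :=
      mul_le_mul_of_nonneg_left h2 hα8.le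
    simp only [← hcst] at hmid
    linarith
  have hcauchy : ∀ j ∈ Finset.Ico k N, CauchySeq fun n => s n j := by
    intro j hj
    refine cauchySeq_of_le_tendsto_0 (s := fun n => s n j)
      (fun K => Real.sqrt ((8/α) * (1/((K:ℝ)+1)))) ?_ ?_
    · intro n p K hn hp
      rw [dist_eq_norm]
      have hkey := key n p j hj
      have h1 : 1/((n:ℝ)+1) ≤ 1/((K:ℝ)+1) := by
        apply one_div_le_one_div_of_le (by positivity)
        exact_mod_cast Nat.succ_le_succ hn
      have h2 : 1/((p:ℝ)+1) ≤ 1/((K:ℝ)+1) := by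
        apply one_div_le_one_div_of_le (by positivity)
        exact_mod_cast Nat.succ_le_succ hp
      show ‖s n j - s p j‖ ≤ Real.sqrt (8/α * (1/((K:ℝ)+1)))
      rw [← Real.sqrt_sq (norm_nonneg (s n j - s p j))]
      apply Real.sqrt_le_sqrt
      have hα' : (0:ℝ) < α := hα
      rw [div_mul_eq_mul_div, le_div_iff₀ hα']
      calc ‖s n j - s p j‖^2 * α = 8 * ((α/8) * ‖s n j - s p j‖^2) := by ring
        _ ≤ 8 * ((1/((n:ℝ)+1) + 1/((p:ℝ)+1))/2) := by linarith
        _ ≤ 8 * (1/((K:ℝ)+1)) := by linarith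
    · have h0 : Filter.Tendsto (fun K : ℕ => (8/α) * (1/((K:ℝ)+1)))
          Filter.atTop (nhds 0) := by
        have := tendsto_one_div_add_atTop_nhds_zero_nat.const_mul (8/α)
        simpa using this
      have := (Real.continuous_sqrt.tendsto 0).comp h0
      simpa [Function.comp_def] using this
  have hlim : ∀ j : ℕ, ∃ l : X, j ∈ Finset.Ico k N →
      Filter.Tendsto (fun n => s n j) Filter.atTop (nhds l) := by
    intro j
    by_cases hj : j ∈ Finset.Ico k N
    · obtain ⟨l, hl⟩ := cauchySeq_tendsto_of_complete (hcauchy j hj)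
      exact ⟨l, fun _ => hl⟩
    · exact ⟨0, fun h => absurd h hj⟩
  choose l hl using hlim
  set u : ℕ → X := fun j => if j ∈ Finset.Ico k N then l j else 0 with hu
  set t : ℕ → ℕ → X := fun n j => if j ∈ Finset.Ico k N then s n j else 0 with ht
  have hteq : ∀ n, cst (t n) = cst (s n) := by
    intro n
    apply bell_cost_congr
    intro i hi
    simp only [ht]
    exact if_pos hi
  have htend : Filter.Tendsto t Filter.atTop (nhds u) := by
    rw [tendsto_pi_nhds]
    intro j
    by_cases hj : j ∈ Finset.Ico k N
    · show Filter.Tendsto (fun n => if j ∈ Finset.Ico k N then s n j else 0)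
        Filter.atTop (nhds (if j ∈ Finset.Ico k N then l j else 0))
      simp only [if_pos hj]
      exact hl j hj
    · show Filter.Tendsto (fun n => if j ∈ Finset.Ico k N then s n j else 0)
        Filter.atTop (nhds (if j ∈ Finset.Ico k N then l j else 0))
      simp only [if_neg hj]
      exact tendsto_const_nhds
  have hcost_tend : Filter.Tendsto (fun n => cst (s n)) Filter.atTop (nhds m) := by
    have hub : Filter.Tendsto (fun n : ℕ => m + 1/((n:ℝ)+1)) Filter.atTop (nhds (m + 0)) :=
      tendsto_const_nhds.add tendsto_one_div_add_atTop_nhds_zero_nat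
    rw [add_zero] at hub
    exact tendsto_of_tendsto_of_tendsto_of_le_of_le tendsto_const_nhds hub
      (fun n => hm_le (s n)) (fun n => (hs n).le)
  have hct : Filter.Tendsto (fun n => cst (t n)) Filter.atTop (nhds (cst u)) :=
    ((bell_cost_continuous N α F L y k ξ).tendsto u).comp htend
  simp only [hteq] at hct
  exact ⟨u, tendsto_nhds_unique hct hcost_tend⟩

lemma bell_bdd (hα : 0 ≤ α) (hLpos : ∀ k (z : Y), 0 ≤ ⟪z, L k z⟫) (k : ℕ) (ξ : X) :
    BddBelow (Set.range fun v : ℕ → X => bellmanCost N α F L y k ξ v) := by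
  refine ⟨0, ?_⟩
  rintro _ ⟨v, rfl⟩
  exact bell_cost_nonneg N α F L y hα hLpos k ξ v

lemma bell_value_le (hα : 0 < α)
    (hLpos : ∀ k (z : Y), 0 ≤ ⟪z, L k z⟫)
    {k : ℕ} (hk : k < N) (ξ : X) (w : X) :
    (⨅ v : ℕ → X, bellmanCost N α F L y k ξ v)
      ≤ (⨅ v : ℕ → X, bellmanCost N α F L y (k+1) (ξ+w) v)
        + (1/2) * ⟪(F k) ξ - y k, (L k) ((F k) ξ - y k)⟫ + (α/2) * ‖w‖^2 := by
  have hstep : ∀ v' : ℕ → X,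
      (⨅ v : ℕ → X, bellmanCost N α F L y k ξ v)
        ≤ bellmanCost N α F L y (k+1) (ξ+w) v'
          + (1/2) * ⟪(F k) ξ - y k, (L k) ((F k) ξ - y k)⟫ + (α/2) * ‖w‖^2 := by
    intro v'
    have h1 : (⨅ v : ℕ → X, bellmanCost N α F L y k ξ v)
        ≤ bellmanCost N α F L y k ξ (Function.update v' k w) :=
      ciInf_le (bell_bdd N α F L y hα.le hLpos k ξ) _
    rw [bell_cost_succ N α F L y hk ξ (Function.update v' k w),
      Function.update_self] at h1
    rw [bell_cost_congr N α F L y (ξ+w)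
      (v := Function.update v' k w) (w := v') ?_] at h1
    · exact h1
    · intro i hi
      have hik : i ≠ k := by
        have := (Finset.mem_Ico.mp hi).1; omega
      exact Function.update_of_ne hik w v'
  have h2 : (⨅ v : ℕ → X, bellmanCost N α F L y k ξ v)
      - (1/2) * ⟪(F k) ξ - y k, (L k) ((F k) ξ - y k)⟫ - (α/2) * ‖w‖^2
      ≤ ⨅ v : ℕ → X, bellmanCost N α F L y (k+1) (ξ+w) v :=
    le_ciInf fun v' => by linarith [hstep v']
  linarith

end

/-- The Bellman optimality principle for the discrete dynamic inverse problem: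
`V(k,ξ) = min_{v ∈ X} { V(k+1, ξ+v) + ½⟨F_k ξ - y_k, L_k(F_k ξ - y_k)⟩ + (α/2)‖v‖² }`,
the minimum being attained. -/
theorem bellman_principle
    {X Y : Type*} [NormedAddCommGroup X] [InnerProductSpace ℝ X] [CompleteSpace X]
    [NormedAddCommGroup Y] [InnerProductSpace ℝ Y] [CompleteSpace Y]
    (N : ℕ) (hN : 1 ≤ N) (α : ℝ) (hα : 0 < α)
    (F : ℕ → X →L[ℝ] Y) (L : ℕ → Y →L[ℝ] Y)
    (hLsa : ∀ k, IsSelfAdjoint (L k))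
    (hLpos : ∀ k (z : Y), 0 ≤ ⟪z, L k z⟫)
    (y : ℕ → Y) (k : ℕ) (hk : k < N) (ξ : X) :
    ∃ v : X,
      bellmanValue N α F L y k ξ =
        bellmanValue N α F L y (k + 1) (ξ + v) +
          (1 / 2) * ⟪(F k) ξ - y k, (L k) ((F k) ξ - y k)⟫ + (α / 2) * ‖v‖ ^ 2 ∧
      ∀ w : X,
        bellmanValue N α F L y k ξ ≤
          bellmanValue N α F L y (k + 1) (ξ + w) +
            (1 / 2) * ⟪(F k) ξ - y k, (L k) ((F k) ξ - y k)⟫ + (α / 2) * ‖w‖ ^ 2 := by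
  obtain ⟨u, hu⟩ := bell_exists_min N α F L y hα hLsa hLpos k ξ
  refine ⟨u k, ?_, fun w => bell_value_le N α F L y hα hLpos hk ξ w⟩
  have h1 : bellmanValue N α F L y k ξ = bellmanCost N α F L y k ξ u := hu.symm
  have h2 : bellmanValue N α F L y (k+1) (ξ + u k)
      ≤ bellmanCost N α F L y (k+1) (ξ + u k) u :=
    ciInf_le (bell_bdd N α F L y hα.le hLpos (k+1) (ξ + u k)) u
  have h3 := bell_value_le N α F L y hα hLpos hk ξ (u k)
  have h4 := bell_cost_succ N α F L y hk ξ u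
  unfold bellmanValue
  unfold bellmanValue at h1 h2 h3
  linarith
end
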